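/- Let n ≥ 1, let U ⊆ ℝⁿ be open, let f : U → ℝ be a C³ function and let u : U → ℝ be a C² function. Then at every point of U, div((Hess f)·∇(u²)) = 2u·⟨∇(Δf), ∇u⟩ + 2u·⟨Hess f, Hess u⟩_F + 2·(∇u)ᵀ·(Hess f)·(∇u). -/

import Mathlib

open scoped BigOperators

/-- Partial derivative `∂ᵢ v` of a scalar function on `ℝⁿ = Fin n → ℝ`. -/
noncomputable def pd {n : ℕ} (i : Fin n) (v : (Fin n → ℝ) → ℝ) (x : Fin n → ℝ) : ℝ :=
  fderiv ℝ v x (Pi.single i 1)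

/-- Gradient `∇v`. -/
noncomputable def grad {n : ℕ} (v : (Fin n → ℝ) → ℝ) (x : Fin n → ℝ) : Fin n → ℝ :=
  fun i => pd i v x

/-- Hessian matrix `(∂ᵢ∂ⱼ v)ᵢⱼ`. -/
noncomputable def hess {n : ℕ} (v : (Fin n → ℝ) → ℝ) (x : Fin n → ℝ) :
    Matrix (Fin n) (Fin n) ℝ :=
  fun i j => pd i (fun y => pd j v y) x

/-- Laplacian `Δv = tr (Hess v)`. -/
noncomputable def lap {n : ℕ} (v : (Fin n → ℝ) → ℝ) (x : Fin n → ℝ) : ℝ :=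
  ∑ i, hess v x i i

/-- Divergence of a vector field. -/
noncomputable def divg {n : ℕ} (X : (Fin n → ℝ) → (Fin n → ℝ)) (x : Fin n → ℝ) : ℝ :=
  ∑ i, pd i (fun y => X y i) x

/-- Euclidean inner product. -/
def dotp {n : ℕ} (a b : Fin n → ℝ) : ℝ := ∑ i, a i * b i

/-- Frobenius inner product of matrices. -/
def frobInner {n : ℕ} (A B : Matrix (Fin n) (Fin n) ℝ) : ℝ := ∑ i, ∑ j, A i j * B i j

/-- Squared Frobenius norm of a matrix. -/
def frobSq {n : ℕ} (A : Matrix (Fin n) (Fin n) ℝ) : ℝ := ∑ i, ∑ j, (A i j) ^ 2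

section helpers
variable {n : ℕ} {U : Set (Fin n → ℝ)} {x : Fin n → ℝ}

lemma pd_congr_on (hU : IsOpen U) (hx : x ∈ U) {v w : (Fin n → ℝ) → ℝ}
    (h : ∀ y ∈ U, v y = w y) (i : Fin n) : pd i v x = pd i w x := by
  unfold pd
  rw [Filter.EventuallyEq.fderiv_eq ?_]
  filter_upwards [hU.mem_nhds hx] with y hy using h y hy

lemma contDiffOn_pd (hU : IsOpen U) {m : ℕ} {v : (Fin n → ℝ) → ℝ}
    (hv : ContDiffOn ℝ (m + 1 : ℕ) v U) (i : Fin n) : ContDiffOn ℝ (m : ℕ) (pd i v) U := by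
  have h1 : ContDiffOn ℝ (m : ℕ) (fderivWithin ℝ v U) U := by
    apply hv.fderivWithin hU.uniqueDiffOn
    exact_mod_cast le_rfl
  have h2 := h1.clm_apply (contDiffOn_const (c := Pi.single i (1:ℝ)))
  apply h2.congr
  intro y hy
  unfold pd
  rw [fderivWithin_of_isOpen hU hy]

lemma diffAt_of_contDiffOn (hU : IsOpen U) (hx : x ∈ U) {m : ℕ} {v : (Fin n → ℝ) → ℝ}
    (hv : ContDiffOn ℝ (m + 1 : ℕ) v U) : DifferentiableAt ℝ v x := by
  exact (hv.contDiffAt (hU.mem_nhds hx)).differentiableAt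
    (by simp)

lemma pd_mul {a b : (Fin n → ℝ) → ℝ} (ha : DifferentiableAt ℝ a x)
    (hb : DifferentiableAt ℝ b x) (i : Fin n) :
    pd i (fun y => a y * b y) x = pd i a x * b x + a x * pd i b x := by
  unfold pd
  rw [fderiv_fun_mul ha hb]
  simp; ring

lemma pd_sum {ι : Type*} (s : Finset ι) {F : ι → (Fin n → ℝ) → ℝ}
    (h : ∀ j ∈ s, DifferentiableAt ℝ (F j) x) (i : Fin n) :
    pd i (fun y => ∑ j ∈ s, F j y) x = ∑ j ∈ s, pd i (F j) x := by
  unfold pd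
  rw [fderiv_fun_sum h]
  simp

lemma pd_const_mul {v : (Fin n → ℝ) → ℝ} (hv : DifferentiableAt ℝ v x) (c : ℝ) (i : Fin n) :
    pd i (fun y => c * v y) x = c * pd i v x := by
  unfold pd
  rw [fderiv_const_mul hv]
  simp

lemma pd_sq {v : (Fin n → ℝ) → ℝ} (hv : DifferentiableAt ℝ v x) (i : Fin n) :
    pd i (fun y => v y ^ 2) x = 2 * v x * pd i v x := by
  have h : pd i (fun y => v y * v y) x = pd i v x * v x + v x * pd i v x := pd_mul hv hv i
  calc pd i (fun y => v y ^ 2) x = pd i (fun y => v y * v y) x := by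
        congr 1; ext y; ring
    _ = 2 * v x * pd i v x := by rw [h]; ring

lemma pd_comm (hU : IsOpen U) (hx : x ∈ U) {v : (Fin n → ℝ) → ℝ}
    (hv : ContDiffOn ℝ 2 v U) (i j : Fin n) :
    pd i (pd j v) x = pd j (pd i v) x := by
  have hvx : ContDiffAt ℝ 2 v x := hv.contDiffAt (hU.mem_nhds hx)
  have hsymm : IsSymmSndFDerivAt ℝ v x := hvx.isSymmSndFDerivAt (by norm_num)
  have hd : DifferentiableAt ℝ (fderiv ℝ v) x := by
    have h1 : ContDiffAt ℝ 1 (fderiv ℝ v) x := hvx.fderiv_right (by norm_num)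
    exact h1.differentiableAt one_ne_zero
  have key : ∀ a b : Fin n,
      pd a (pd b v) x = fderiv ℝ (fderiv ℝ v) x (Pi.single a 1) (Pi.single b 1) := by
    intro a b
    unfold pd
    rw [fderiv_clm_apply hd (differentiableAt_const _)]
    simp
  rw [key i j, key j i, hsymm]

end helpers

theorem stmt7 {n : ℕ} (hn : 1 ≤ n) {U : Set (Fin n → ℝ)} (hU : IsOpen U)
    (f u : (Fin n → ℝ) → ℝ)
    (hf : ContDiffOn ℝ 3 f U) (hu : ContDiffOn ℝ 2 u U) :
    ∀ x ∈ U,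
      divg (fun y => (hess f y).mulVec (grad (fun z => (u z) ^ 2) y)) x =
        2 * u x * dotp (grad (fun y => lap f y) x) (grad u x)
        + 2 * u x * frobInner (hess f x) (hess u x)
        + 2 * dotp (grad u x) ((hess f x).mulVec (grad u x)) := by
  intro x hx
  -- smoothness bookkeeping
  have hf3 : ContDiffOn ℝ ((2 + 1 : ℕ) : ℕ) f U := by exact_mod_cast hf
  have hu2 : ContDiffOn ℝ ((1 + 1 : ℕ) : ℕ) u U := by exact_mod_cast hu
  have hfj : ∀ j : Fin n, ContDiffOn ℝ ((1 + 1 : ℕ) : ℕ) (pd j f) U := by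
    intro j; exact_mod_cast contDiffOn_pd hU hf3 j
  have hfij : ∀ i j : Fin n, ContDiffOn ℝ ((0 + 1 : ℕ) : ℕ) (pd i (pd j f)) U := by
    intro i j; exact_mod_cast contDiffOn_pd hU (hfj j) i
  have huj : ∀ j : Fin n, ContDiffOn ℝ ((0 + 1 : ℕ) : ℕ) (pd j u) U := by
    intro j; exact_mod_cast contDiffOn_pd hU hu2 j
  -- differentiability at points of U
  have du : ∀ y ∈ U, DifferentiableAt ℝ u y := fun y hy => diffAt_of_contDiffOn hU hy hu2
  have dw : ∀ (j : Fin n), ∀ y ∈ U, DifferentiableAt ℝ (pd j u) y :=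
    fun j y hy => diffAt_of_contDiffOn hU hy (huj j)
  have dH : ∀ (i j : Fin n), ∀ y ∈ U, DifferentiableAt ℝ (pd i (pd j f)) y :=
    fun i j y hy => diffAt_of_contDiffOn hU hy (hfij i j)
  -- abbreviations (values at x)
  set w : Fin n → ℝ := fun j => pd j u x with hwdef
  set H : Fin n → Fin n → ℝ := fun i j => pd i (pd j f) x with hHdef
  set K : Fin n → Fin n → ℝ := fun i j => pd i (pd j u) x with hKdef
  set Q : Fin n → Fin n → ℝ := fun i j => pd j (pd i (pd i f)) x with hQdef
  -- third derivative symmetry: ∂i∂i∂j f = ∂j∂i∂i f at x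
  have hP : ∀ i j : Fin n, pd i (pd i (pd j f)) x = Q i j := by
    intro i j
    have h1 : pd i (pd i (pd j f)) x = pd i (pd j (pd i f)) x := by
      apply pd_congr_on hU hx _ i
      intro y hy
      exact pd_comm hU hy (by exact_mod_cast hf3.of_le (by norm_num)) i j
    have h2 : pd i (pd j (pd i f)) x = pd j (pd i (pd i f)) x := by
      exact pd_comm hU hx (by exact_mod_cast hfj i) i j
    rw [h1, h2]
  -- the LHS expansion
  have hLHS : divg (fun y => (hess f y).mulVec (grad (fun z => (u z) ^ 2) y)) x =
      ∑ i, ∑ j, (Q i j * (2 * (u x * w j)) + H i j * (2 * (pd i u x * w j + u x * K i j))) := by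
    unfold divg
    apply Finset.sum_congr rfl
    intro i _
    have step1 : pd i (fun y => (hess f y).mulVec (grad (fun z => (u z) ^ 2) y) i) x =
        pd i (fun y => ∑ j, pd i (pd j f) y * (2 * (u y * pd j u y))) x := by
      apply pd_congr_on hU hx _ i
      intro y hy
      simp only [Matrix.mulVec, dotProduct, hess, grad]
      apply Finset.sum_congr rfl
      intro j _
      have hq := pd_sq (du y hy) j
      rw [hq]
      ring
    have step2 : pd i (fun y => ∑ j, pd i (pd j f) y * (2 * (u y * pd j u y))) x =
        ∑ j, pd i (fun y => pd i (pd j f) y * (2 * (u y * pd j u y))) x := by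
      apply pd_sum
      intro j _
      exact (dH i j x hx).mul (((du x hx).mul (dw j x hx)).const_mul 2)
    have step3 : ∀ j : Fin n,
        pd i (fun y => pd i (pd j f) y * (2 * (u y * pd j u y))) x =
        Q i j * (2 * (u x * w j)) + H i j * (2 * (pd i u x * w j + u x * K i j)) := by
      intro j
      have hmul := pd_mul (b := fun y => 2 * (u y * pd j u y)) (dH i j x hx) (((du x hx).mul (dw j x hx)).const_mul 2) i
      rw [hmul]
      have hinner : pd i (fun y => 2 * (u y * pd j u y)) x =
          2 * (pd i u x * w j + u x * K i j) := by
        rw [pd_const_mul (v := fun y => u y * pd j u y) ((du x hx).mul (dw j x hx)) 2 i,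
          pd_mul (du x hx) (dw j x hx) i]
      rw [hinner, hP i j]
    rw [step1, step2]
    exact Finset.sum_congr rfl fun j _ => step3 j
  -- RHS pieces
  have hgl : ∀ j : Fin n, grad (fun y => lap f y) x j = ∑ i, Q i j := by
    intro j
    show pd j (fun y => lap f y) x = _
    have h1 : pd j (fun y => ∑ i, pd i (pd i f) y) x = ∑ i, pd j (pd i (pd i f)) x := by
      apply pd_sum
      intro i _
      exact dH i i x hx
    simpa [lap, hess] using h1
  have hA : 2 * u x * dotp (grad (fun y => lap f y) x) (grad u x) =
      ∑ i, ∑ j, 2 * u x * Q i j * w j := by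
    have e1 : dotp (grad (fun y => lap f y) x) (grad u x) = ∑ j, (∑ i, Q i j) * w j := by
      unfold dotp
      exact Finset.sum_congr rfl fun j _ => by rw [hgl j]; rfl
    rw [e1, Finset.mul_sum, Finset.sum_comm]
    apply Finset.sum_congr rfl
    intro i _
    rw [Finset.sum_mul, Finset.mul_sum]
    exact Finset.sum_congr rfl fun j _ => by ring
  have hB : 2 * u x * frobInner (hess f x) (hess u x) =
      ∑ i, ∑ j, 2 * u x * H i j * K i j := by
    unfold frobInner
    rw [Finset.mul_sum]
    apply Finset.sum_congr rfl
    intro i _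
    rw [Finset.mul_sum]
    apply Finset.sum_congr rfl
    intro j _
    have e2 : hess f x i j = H i j := rfl
    have e3 : hess u x i j = K i j := rfl
    rw [e2, e3]; ring
  have hC : 2 * dotp (grad u x) ((hess f x).mulVec (grad u x)) =
      ∑ i, ∑ j, 2 * w i * H i j * w j := by
    unfold dotp
    rw [Finset.mul_sum]
    apply Finset.sum_congr rfl
    intro i _
    have e4 : (hess f x).mulVec (grad u x) i = ∑ j, H i j * w j := by
      simp only [Matrix.mulVec, dotProduct, hess, grad]; rfl
    have e5 : grad u x i = w i := rfl
    rw [e4, e5, Finset.mul_sum, Finset.mul_sum]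
    exact Finset.sum_congr rfl fun j _ => by ring
  rw [hLHS, hA, hB, hC, ← Finset.sum_add_distrib, ← Finset.sum_add_distrib]
  apply Finset.sum_congr rfl
  intro i _
  rw [← Finset.sum_add_distrib, ← Finset.sum_add_distrib]
  exact Finset.sum_congr rfl fun j _ => by ring
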